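/- Let Δ > 0 and consider the DoS signal with pulses (h_n, τ_n) = (nΔ, 0) for all n ∈ ℕ. This signal satisfies the DoS frequency assumption n(τ,t) ≤ η + (t−τ)/τ_D with η = 1 and τ_D = Δ, and the DoS duration assumption |Ξ(τ,t)| ≤ κ + (t−τ)/T with κ = 0 and T = ∞ (i.e., |Ξ(τ,t)| = 0), it achieves 1/T + Δ/τ_D = 1, and it disrupts every periodic transmission attempt at times t_k = kΔ. -/

import Mathlib

open MeasureTheory Set

/-- The DoS signal of pulses `(h_n, τ_n) = (nΔ, 0)`, i.e. the DoS
sets are the singletons `{nΔ}`, satisfies the DoS frequency assumption with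
`η = 1`, `τ_D = Δ`, the duration assumption with `κ = 0`, `T = ∞`
(its total duration is zero), it achieves `1/T + Δ/τ_D = 1` (with `1/∞ = 0`),
and it disrupts every periodic transmission attempt at `t_k = kΔ`. -/
theorem stmt1 (Δ : ℝ) (hΔ : 0 < Δ)
    (H : ℕ → Set ℝ) (hH : ∀ n : ℕ, H n = {(n : ℝ) * Δ}) :
    -- frequency assumption with η = 1, τ_D = Δ
    (∀ τ t : ℝ, 0 ≤ τ → τ ≤ t →
      (Nat.card {n : ℕ | (n : ℝ) * Δ ∈ Set.Ico τ t} : ℝ) ≤ 1 + (t - τ) / Δ) ∧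
    -- duration assumption with κ = 0, T = ∞ : |Ξ(τ,t)| = 0
    (∀ τ t : ℝ, 0 ≤ τ → τ ≤ t →
      (volume ((⋃ n, H n) ∩ Set.Icc τ t)).toReal = 0) ∧
    -- 1/T + Δ/τ_D = 1 with 1/T = 0 and τ_D = Δ
    (0 + Δ / Δ = 1) ∧
    -- every transmission attempt t_k = kΔ is disrupted
    (∀ k : ℕ, (k : ℝ) * Δ ∈ ⋃ n, H n) := by
  refine ⟨?_, ?_, by field_simp; norm_num, ?_⟩
  · intro τ t hτ hτt
    set m : ℕ := ⌈τ / Δ⌉₊ with hm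
    set N : ℕ := ⌈t / Δ⌉₊ with hN
    have hsub : {n : ℕ | (n : ℝ) * Δ ∈ Set.Ico τ t} ⊆ ↑(Finset.Ico m N) := by
      intro n hn
      obtain ⟨h1, h2⟩ := hn
      simp only [Finset.coe_Ico, Set.mem_Ico]
      constructor
      · exact Nat.ceil_le.2 (by rw [div_le_iff₀ hΔ] ; linarith)
      · have : (n : ℝ) < t / Δ := by rw [lt_div_iff₀ hΔ]; linarith
        exact_mod_cast this.trans_le (Nat.le_ceil _)
    have hcard : Nat.card {n : ℕ | (n : ℝ) * Δ ∈ Set.Ico τ t} ≤ N - m := by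
      have := Nat.card_mono (Finset.Ico m N).finite_toSet hsub
      simpa [Nat.card_coe_set_eq, Set.ncard_coe_finset] using this
    have hNle : (N : ℝ) < t / Δ + 1 := Nat.ceil_lt_add_one (div_nonneg (hτ.trans hτt) hΔ.le)
    have hmge : τ / Δ ≤ (m : ℝ) := Nat.le_ceil _
    have hrhs : (0:ℝ) ≤ 1 + (t - τ) / Δ := by
      have := div_nonneg (sub_nonneg.2 hτt) hΔ.le; linarith
    rcases le_or_gt m N with h | h
    · have : ((N - m : ℕ) : ℝ) = (N : ℝ) - m := by
        rw [Nat.cast_sub h]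
      calc (Nat.card {n : ℕ | (n : ℝ) * Δ ∈ Set.Ico τ t} : ℝ) ≤ ((N - m : ℕ) : ℝ) := by
            exact_mod_cast hcard
        _ = (N : ℝ) - m := this
        _ ≤ (t / Δ + 1) - τ / Δ := by linarith
        _ = 1 + (t - τ) / Δ := by ring
    · have : N - m = 0 := Nat.sub_eq_zero_of_le h.le
      calc (Nat.card {n : ℕ | (n : ℝ) * Δ ∈ Set.Ico τ t} : ℝ) ≤ ((N - m : ℕ) : ℝ) := by
            exact_mod_cast hcard
        _ = 0 := by rw [this]; simp
        _ ≤ 1 + (t - τ) / Δ := hrhs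
  · intro τ t _ _
    have h0 : volume (⋃ n, H n) = 0 := by
      refine measure_iUnion_null fun n => ?_
      rw [hH n]; exact measure_singleton _
    have : volume ((⋃ n, H n) ∩ Set.Icc τ t) = 0 :=
      measure_mono_null Set.inter_subset_left h0
    simp [this]
  · intro k
    exact Set.mem_iUnion.2 ⟨k, by rw [hH k]; rfl⟩
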